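/- Let * be a continuous t-norm and let φ, ξ be distance distributions. Then there exists a distance distribution ψ with φ ⊗ ψ = ξ (i.e., ξ is a diagonal on φ in the quantale of distance distributions) if and only if ξ(t) = sup_{s<t} inf_{q>0} φ(t−s) * (φ(q) →* ξ(q+s)) for every t ∈ [0,∞) (i.e., for every finite t). -/

import Mathlib

open unitInterval
open scoped ENNReal

noncomputable section

instance : Fact ((0:ℝ) ≤ 1) := ⟨zero_le_one⟩

/-- A distance distribution: a map `φ : [0,∞] → [0,1]` with `φ t = ⨆ s < t, φ s`. -/
def DistDistr (φ : ℝ≥0∞ → I) : Prop :=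
  ∀ t, φ t = ⨆ (s : ℝ≥0∞) (_ : s < t), φ s

/-- The one-step function `κ_{p,a}`. -/
def kappa (p : ℝ≥0∞) (a : I) : ℝ≥0∞ → I :=
  fun t => if t ≤ p then 0 else a

/-- A continuous t-norm on `[0,1]`. -/
structure ContinuousTNorm where
  mul : I → I → I
  continuous' : Continuous fun p : I × I => mul p.1 p.2
  comm : ∀ a b, mul a b = mul b a
  assoc : ∀ a b c, mul (mul a b) c = mul a (mul b c)
  mono : ∀ a, Monotone (mul a)
  mul_one : ∀ a, mul a 1 = a

/-- The residual `a →* b` of a continuous t-norm. -/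
def ContinuousTNorm.residual (T : ContinuousTNorm) (a b : I) : I :=
  sSup {c | T.mul a c ≤ b}

/-- Convolution of maps `[0,∞] → [0,1]` w.r.t. a continuous t-norm. -/
def conv (T : ContinuousTNorm) (φ ψ : ℝ≥0∞ → I) : ℝ≥0∞ → I :=
  fun t => ⨆ (r : ℝ≥0∞) (s : ℝ≥0∞) (_ : r + s = t), T.mul (φ r) (ψ s)

/-- `φ⁻ t = ⨆ s < t, φ s`. -/
def lower (φ : ℝ≥0∞ → I) : ℝ≥0∞ → I :=
  fun t => ⨆ (s : ℝ≥0∞) (_ : s < t), φ s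

namespace Stmt14Aux

lemma I_zero_le (x : I) : (0 : I) ≤ x := x.2.1

lemma I_bot_eq_zero : (⊥ : I) = 0 := le_antisymm bot_le (I_zero_le ⊥)

variable (T : ContinuousTNorm)

lemma cont_mul_left (a : I) : Continuous (T.mul a) :=
  T.continuous'.comp (Continuous.prodMk continuous_const continuous_id)

lemma mul_zero' (a : I) : T.mul a 0 = 0 := by
  refine le_antisymm ?_ (I_zero_le _)
  calc T.mul a 0 = T.mul 0 a := T.comm a 0
    _ ≤ T.mul 0 1 := T.mono 0 le_one'
    _ = 0 := T.mul_one 0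

lemma mul_le_mul' {a b c d : I} (h1 : a ≤ c) (h2 : b ≤ d) : T.mul a b ≤ T.mul c d := by
  calc T.mul a b = T.mul b a := T.comm a b
    _ ≤ T.mul b c := T.mono b h1
    _ = T.mul c b := T.comm b c
    _ ≤ T.mul c d := T.mono c h2

lemma mul_iSup {ι : Sort*} [Nonempty ι] (a : I) (f : ι → I) :
    T.mul a (⨆ i, f i) = ⨆ i, T.mul a (f i) :=
  Monotone.map_ciSup_of_continuousAt ((cont_mul_left T a).continuousAt) (T.mono a)
    (OrderTop.bddAbove _)

lemma mul_iInf {ι : Sort*} [Nonempty ι] (a : I) (f : ι → I) :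
    T.mul a (⨅ i, f i) = ⨅ i, T.mul a (f i) :=
  Monotone.map_ciInf_of_continuousAt ((cont_mul_left T a).continuousAt) (T.mono a)
    (OrderBot.bddBelow _)

lemma le_residual {a b c : I} (h : T.mul a c ≤ b) : c ≤ T.residual a b :=
  le_sSup h

lemma mul_residual_le (a b : I) : T.mul a (T.residual a b) ≤ b := by
  have hne : Set.Nonempty {c | T.mul a c ≤ b} := ⟨0, by simp [mul_zero' T a, I_zero_le]⟩
  rw [ContinuousTNorm.residual,
    Monotone.map_csSup_of_continuousAt ((cont_mul_left T a).continuousAt) (T.mono a) hne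
      (OrderTop.bddAbove _)]
  exact csSup_le (hne.image _) (by rintro _ ⟨c, hc, rfl⟩; exact hc)

lemma DistDistr.mono {φ : ℝ≥0∞ → I} (h : DistDistr φ) : Monotone φ := by
  intro a b hab
  rw [h a, h b]
  exact biSup_mono fun s hs => lt_of_lt_of_le hs hab

lemma DistDistr.zero {φ : ℝ≥0∞ → I} (h : DistDistr φ) : φ 0 = 0 := by
  rw [h 0]
  simp [I_bot_eq_zero]

lemma lower_distDistr (φ : ℝ≥0∞ → I) : DistDistr (lower φ) := by
  intro t
  refine le_antisymm ?_ ?_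
  · refine iSup₂_le fun s hs => ?_
    obtain ⟨u, hsu, hut⟩ := exists_between hs
    exact le_iSup₂_of_le u hut (le_iSup₂_of_le s hsu le_rfl)
  · exact iSup₂_le fun s hs => biSup_mono fun u hu => lt_trans hu hs

lemma le_conv (φ ψ : ℝ≥0∞ → I) (r s : ℝ≥0∞) :
    T.mul (φ r) (ψ s) ≤ conv T φ ψ (r + s) :=
  le_iSup₂_of_le r s (le_iSup_of_le rfl le_rfl)

lemma conv_mono (φ ψ : ℝ≥0∞ → I) (hψ : Monotone ψ) : Monotone (conv T φ ψ) := by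
  intro t t' htt'
  rcases eq_or_lt_of_le htt' with rfl | hlt
  · exact le_rfl
  refine iSup₂_le fun r s => iSup_le fun hrs => ?_
  have hrtop : r ≠ ∞ := by
    intro hr; rw [hr] at hrs; simp [← hrs] at hlt
  have hr : r ≤ t' := le_trans (le_trans le_self_add hrs.le) htt'
  have h1 : s ≤ t' - r := ENNReal.le_sub_of_add_le_left hrtop (by rw [hrs]; exact htt')
  calc T.mul (φ r) (ψ s) ≤ T.mul (φ r) (ψ (t' - r)) := T.mono _ (hψ h1)
    _ ≤ conv T φ ψ (r + (t' - r)) := le_conv T φ ψ _ _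
    _ = conv T φ ψ t' := by rw [add_tsub_cancel_of_le hr]

/-- The canonical candidate `ψ₀`. -/
def psi0 (φ ξ : ℝ≥0∞ → I) : ℝ≥0∞ → I :=
  fun s => ⨅ (q : ℝ≥0∞) (_ : 0 < q), T.residual (φ q) (ξ (q + s))

lemma mul_psi0_le {φ ξ : ℝ≥0∞ → I} (hφ : DistDistr φ) (r s : ℝ≥0∞) :
    T.mul (φ r) (psi0 T φ ξ s) ≤ ξ (r + s) := by
  rcases eq_or_lt_of_le (zero_le : (0:ℝ≥0∞) ≤ r) with hr | hr
  · rw [← hr, DistDistr.zero hφ, T.comm, mul_zero' T]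
    exact I_zero_le _
  · calc T.mul (φ r) (psi0 T φ ξ s) ≤ T.mul (φ r) (T.residual (φ r) (ξ (r + s))) :=
        T.mono _ (iInf₂_le r hr)
      _ ≤ ξ (r + s) := mul_residual_le T _ _

lemma le_psi0 {φ ψ ξ : ℝ≥0∞ → I} (h : ∀ t, conv T φ ψ t ≤ ξ t) (s : ℝ≥0∞) :
    ψ s ≤ psi0 T φ ξ s := by
  refine le_iInf₂ fun q hq => le_residual T ?_
  exact le_trans (le_conv T φ ψ q s) (h (q + s))

/-- The RHS of the characterization, rewritten via `psi0`. -/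
lemma rhs_eq (φ ξ : ℝ≥0∞ → I) (t : ℝ≥0∞) :
    (⨆ (s : ℝ≥0∞) (_ : s < t), ⨅ (q : ℝ≥0∞) (_ : 0 < q),
        T.mul (φ (t - s)) (T.residual (φ q) (ξ (q + s)))) =
      ⨆ (s : ℝ≥0∞) (_ : s < t), T.mul (φ (t - s)) (psi0 T φ ξ s) := by
  haveI : Nonempty {q : ℝ≥0∞ // 0 < q} := ⟨⟨1, one_pos⟩⟩
  refine iSup_congr fun s => iSup_congr fun _ => ?_
  rw [psi0, iInf_subtype', iInf_subtype', mul_iInf]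

end Stmt14Aux

open Stmt14Aux

/-- `ξ` is a diagonal on `φ` (i.e. `ξ = φ ⊗ ψ` for some distance
distribution `ψ`) iff `ξ t = ⨆ s < t, ⨅ q > 0, φ (t - s) * (φ q →* ξ (q + s))`
for every finite `t`. -/
theorem stmt_14 (T : ContinuousTNorm) (φ ξ : ℝ≥0∞ → I) (hφ : DistDistr φ) (hξ : DistDistr ξ) :
    (∃ ψ : ℝ≥0∞ → I, DistDistr ψ ∧ conv T φ ψ = ξ) ↔
      ∀ t : ℝ≥0∞, t ≠ ∞ →
        ξ t = ⨆ (s : ℝ≥0∞) (_ : s < t), ⨅ (q : ℝ≥0∞) (_ : 0 < q),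
          T.mul (φ (t - s)) (T.residual (φ q) (ξ (q + s))) := by
  constructor
  · rintro ⟨ψ, hψ, hconv⟩ t ht
    rw [rhs_eq T φ ξ t]
    refine le_antisymm ?_ ?_
    · -- ξ t ≤ RHS
      conv_lhs => rw [← hconv]
      refine iSup₂_le fun r s => iSup_le fun hrs => ?_
      rcases eq_or_lt_of_le (zero_le : (0:ℝ≥0∞) ≤ s) with hs | hs
      · rw [← hs, DistDistr.zero hψ, mul_zero' T]
        exact I_zero_le _
      · -- s > 0
        have hst : s ≤ t := le_trans le_add_self hrs.le
        haveI : Nonempty {s' // s' < s} := ⟨⟨0, hs⟩⟩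
        rw [hψ s, iSup_subtype', mul_iSup T (φ r) (fun s' : {s' // s' < s} => ψ s'.1)]
        refine iSup_le fun s' => ?_
        have hs't : s'.1 < t := lt_of_lt_of_le s'.2 hst
        have hs'top : s'.1 ≠ ∞ := (lt_of_lt_of_le hs't le_top).ne_top
        have hr : r ≤ t - s'.1 := ENNReal.le_sub_of_add_le_right hs'top
          (by rw [← hrs]; exact add_le_add_right s'.2.le r)
        refine le_iSup₂_of_le s'.1 hs't ?_
        exact mul_le_mul' T (DistDistr.mono hφ hr)
          (le_psi0 T (fun u => by rw [hconv]) s'.1)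
    · -- RHS ≤ ξ t
      refine iSup₂_le fun s hst => ?_
      have : T.mul (φ (t - s)) (psi0 T φ ξ s) ≤ ξ (t - s + s) := mul_psi0_le T hφ _ _
      rwa [tsub_add_cancel_of_le hst.le] at this
  · intro h
    set ψ : ℝ≥0∞ → I := lower (psi0 T φ ξ) with hψdef
    have hψ : DistDistr ψ := lower_distDistr _
    refine ⟨ψ, hψ, ?_⟩
    -- conv T φ ψ ≤ ξ everywhere
    have hle : ∀ t, conv T φ ψ t ≤ ξ t := by
      intro t
      refine iSup₂_le fun r s => iSup_le fun hrs => ?_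
      rcases eq_or_lt_of_le (zero_le : (0:ℝ≥0∞) ≤ s) with hs | hs
      · rw [← hs, DistDistr.zero hψ, mul_zero' T]
        exact I_zero_le _
      · haveI : Nonempty {s' // s' < s} := ⟨⟨0, hs⟩⟩
        have : ψ s = ⨆ (s' : {s' // s' < s}), psi0 T φ ξ s'.1 := by
          rw [hψdef, lower, iSup_subtype']
        rw [this, mul_iSup T (φ r)]
        refine iSup_le fun s' => ?_
        calc T.mul (φ r) (psi0 T φ ξ s'.1) ≤ ξ (r + s'.1) := mul_psi0_le T hφ _ _
          _ ≤ ξ t := DistDistr.mono hξ (by rw [← hrs]; exact add_le_add_right s'.2.le r)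
    -- for finite t, ξ t ≤ conv t
    have hfin : ∀ t : ℝ≥0∞, t ≠ ∞ → conv T φ ψ t = ξ t := by
      intro t ht
      refine le_antisymm (hle t) ?_
      rw [h t ht, rhs_eq T φ ξ t]
      refine iSup₂_le fun s hst => ?_
      have hts : (0 : ℝ≥0∞) < t - s := tsub_pos_of_lt hst
      haveI : Nonempty {r // r < t - s} := ⟨⟨0, hts⟩⟩
      have : φ (t - s) = ⨆ (r : {r // r < t - s}), φ r.1 := by
        rw [hφ (t - s), iSup_subtype']
      rw [this, T.comm, mul_iSup T _]
      refine iSup_le fun r => ?_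
      have hrt : r.1 ≤ t := le_trans r.2.le tsub_le_self
      have hrs : r.1 + s < t := by
        have := r.2
        rw [lt_tsub_iff_right] at this
        exact this
      have hstr : s < t - r.1 := lt_tsub_iff_right.mpr (by rwa [add_comm])
      calc T.mul (psi0 T φ ξ s) (φ r.1) = T.mul (φ r.1) (psi0 T φ ξ s) := T.comm _ _
        _ ≤ T.mul (φ r.1) (ψ (t - r.1)) := T.mono _ (le_iSup₂_of_le s hstr le_rfl)
        _ ≤ conv T φ ψ (r.1 + (t - r.1)) := le_conv T φ ψ _ _
        _ = conv T φ ψ t := by rw [add_tsub_cancel_of_le hrt]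
    funext t
    rcases eq_or_ne t ∞ with rfl | ht
    · refine le_antisymm (hle ∞) ?_
      rw [hξ ∞]
      refine iSup₂_le fun s hs => ?_
      rw [← hfin s hs.ne]
      exact conv_mono T φ ψ (DistDistr.mono hψ) le_top
    · exact hfin t ht
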